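/- Let Λ ⊆ Z^N be a lattice of full rank N with determinant Δ, and let R ≥ 1. Then for every z ∈ R^N, the number of points of Λ in the translated cube C_R^N + z = {x : max_i |x_i − z_i| ≤ R} is at most (2R/Δ + 1)(2R + 1)^{N−1}. -/

import Mathlib

lemma count_arith (a : ℕ) (ha : a ≠ 0) (r : ℤ) (w R : ℝ) (hR : 0 ≤ R) :
    (({c : ℤ | (a : ℤ) ∣ (c - r) ∧ |(c : ℝ) - w| ≤ R}).ncard : ℝ) ≤ 2 * R / a + 1 := by
  have ha0 : (0 : ℝ) < a := by positivity
  set lo : ℤ := ⌈(w - r - R) / a⌉ with hlo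
  set hi : ℤ := ⌊(w - r + R) / a⌋ with hhi
  have hdd : (w - r - R) / a ≤ (w - r + R) / a := by gcongr <;> linarith
  have hmono : lo ≤ hi + 1 := by
    have l1 : (lo : ℝ) < (w - r - R) / a + 1 := Int.ceil_lt_add_one _
    have l2 : (w - r + R) / a < hi + 1 := Int.lt_floor_add_one _
    have h3 : (lo : ℝ) < ((hi + 2 : ℤ) : ℝ) := by push_cast; linarith
    have h4 : lo < hi + 2 := by exact_mod_cast h3
    omega
  have hsub : ({c : ℤ | (a : ℤ) ∣ (c - r) ∧ |(c : ℝ) - w| ≤ R}).ncard ≤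
      (Set.Icc lo hi).ncard := by
    apply Set.ncard_le_ncard_of_injOn (fun c => (c - r) / a)
    · rintro c ⟨⟨k, hk⟩, hb⟩
      have hdiv : (c - r) / (a : ℤ) = k := by
        rw [hk, Int.mul_ediv_cancel_left _ (by exact_mod_cast ha)]
      have hc : (c : ℝ) = r + a * k := by
        have h5 : ((c - r : ℤ) : ℝ) = ((↑a * k : ℤ) : ℝ) := by rw [hk]
        push_cast at h5
        linarith
      rw [abs_le] at hb
      rw [Set.mem_Icc]
      constructor
      · show lo ≤ (c - r) / (a : ℤ)
        rw [hdiv, hlo]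
        apply Int.ceil_le.2
        rw [div_le_iff₀ ha0]
        push_cast
        nlinarith [hb.1]
      · show (c - r) / (a : ℤ) ≤ hi
        rw [hdiv, hhi]
        apply Int.le_floor.2
        rw [le_div_iff₀ ha0]
        push_cast
        nlinarith [hb.2]
    · rintro c1 ⟨⟨k1, hk1⟩, -⟩ c2 ⟨⟨k2, hk2⟩, -⟩ h
      have h' : (c1 - r) / (a : ℤ) = (c2 - r) / (a : ℤ) := h
      have e1 : (c1 - r) / (a : ℤ) = k1 := by
        rw [hk1, Int.mul_ediv_cancel_left _ (by exact_mod_cast ha)]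
      have e2 : (c2 - r) / (a : ℤ) = k2 := by
        rw [hk2, Int.mul_ediv_cancel_left _ (by exact_mod_cast ha)]
      have hk : k1 = k2 := by rw [← e1, ← e2]; exact h'
      have h6 : c1 - r = c2 - r := hk1.trans (by rw [hk, ← hk2])
      omega
  have hz0 : (((hi + 1 - lo).toNat : ℤ)) = hi + 1 - lo := Int.toNat_of_nonneg (by omega)
  have hcard : ((Set.Icc lo hi).ncard : ℝ) ≤ (hi : ℝ) + 1 - lo := by
    rw [← Finset.coe_Icc, Set.ncard_coe_finset, Int.card_Icc]
    calc (((hi + 1 - lo).toNat : ℕ) : ℝ) = (((hi + 1 - lo).toNat : ℤ) : ℝ) := by push_cast; ring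
      _ = ((hi : ℝ) + 1 - lo) := by rw [hz0]; push_cast; ring
      _ ≤ _ := le_refl _
  have h1 : (hi : ℝ) ≤ (w - r + R) / a := Int.floor_le _
  have h2 : (w - r - R) / a ≤ (lo : ℝ) := Int.le_ceil _
  calc (({c : ℤ | (a : ℤ) ∣ (c - r) ∧ |(c : ℝ) - w| ≤ R}).ncard : ℝ)
      ≤ ((Set.Icc lo hi).ncard : ℝ) := by exact_mod_cast hsub
    _ ≤ (hi : ℝ) + 1 - lo := hcard
    _ ≤ (w - r + R) / a + 1 - (w - r - R) / a := by linarith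
    _ = 2 * R / a + 1 := by field_simp; ring



lemma box_finite (n : ℕ) (z : Fin n → ℝ) (R : ℝ) :
    {x : Fin n → ℤ | ∀ i, |(x i : ℝ) - z i| ≤ R}.Finite := by
  apply Set.Finite.subset (Set.Finite.pi (fun i => Set.finite_Icc (⌈z i - R⌉) (⌊z i + R⌋)))
  intro x hx
  simp only [Set.mem_pi, Set.mem_univ, true_implies, Set.mem_Icc]
  intro i
  have := abs_le.1 (hx i)
  constructor
  · exact Int.ceil_le.2 (by linarith)
  · exact Int.le_floor.2 (by linarith)

lemma algebra_step (R m d : ℝ) (hR : 0 ≤ R) (hm : 1 ≤ m) (hd : 1 ≤ d) :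
    (2 * R / d + 1) * (2 * R / m + 1) ≤ (2 * R / (m * d) + 1) * (2 * R + 1) := by
  have hm0 : (0 : ℝ) < m := by linarith
  have hd0 : (0 : ℝ) < d := by linarith
  have h : (2 * R + d) * (2 * R + m) ≤ (2 * R + m * d) * (2 * R + 1) := by
    nlinarith [mul_nonneg (sub_nonneg.2 hm) (sub_nonneg.2 hd), hR]
  have e1 : (2 * R / d + 1) * (2 * R / m + 1) = ((2 * R + d) * (2 * R + m)) / (m * d) := by
    field_simp
  have e2 : (2 * R / (m * d) + 1) * (2 * R + 1) = ((2 * R + m * d) * (2 * R + 1)) / (m * d) := by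
    field_simp
  rw [e1, e2]
  gcongr

lemma key (N : ℕ) : ∀ (Λ : AddSubgroup (Fin N → ℤ)), Λ.index ≠ 0 → ∀ (R : ℝ), 1 ≤ R →
    ∀ (z : Fin N → ℝ),
    (({x | x ∈ Λ ∧ ∀ i, |(x i : ℝ) - z i| ≤ R}).ncard : ℝ) ≤
      if N = 0 then 1 else (2 * R / Λ.index + 1) * (2 * R + 1) ^ (N - 1) := by
  induction N with
  | zero =>
    intro Λ hD R hR z
    rw [if_pos rfl]
    have hsub : {x : Fin 0 → ℤ | x ∈ Λ ∧ ∀ i, |(x i : ℝ) - z i| ≤ R} ⊆ {0} := by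
      intro x _; exact Subsingleton.elim x 0
    have h0 := Set.ncard_le_ncard hsub (Set.finite_singleton 0)
    have h1 : ({(0 : Fin 0 → ℤ)} : Set (Fin 0 → ℤ)).ncard = 1 := Set.ncard_singleton 0
    rw [h1] at h0
    exact_mod_cast h0
  | succ N ih =>
    intro Λ hD R hR z
    rw [if_neg (Nat.succ_ne_zero N)]
    have hR0 : (0 : ℝ) ≤ R := by linarith
    -- the projection
    set π : (Fin (N + 1) → ℤ) →+ (Fin N → ℤ) :=
      { toFun := fun x => x ∘ Fin.succ
        map_zero' := rfl
        map_add' := fun _ _ => rfl } with hπ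
    have hπapp : ∀ (x : Fin (N + 1) → ℤ) (i : Fin N), π x i = x i.succ := fun _ _ => rfl
    have hπsur : Function.Surjective π := by
      intro y
      exact ⟨Fin.cons 0 y, funext fun i => by rw [hπapp]; exact Fin.cons_succ _ _ _⟩
    set m : ℕ := Λ.relIndex π.ker with hm
    -- index multiplicativity
    have hrange : π.range = ⊤ := AddMonoidHom.range_eq_top_of_surjective π hπsur
    have h1 : (Λ.map π).index = (Λ ⊔ π.ker).index := by
      rw [AddSubgroup.index_map, hrange, AddSubgroup.index_top, mul_one]
    have h2 : Λ.relIndex (Λ ⊔ π.ker) * (Λ ⊔ π.ker).index = Λ.index :=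
      AddSubgroup.relIndex_mul_index le_sup_left
    have h3 : Λ.relIndex (Λ ⊔ π.ker) = m := by
      rw [sup_comm]; exact AddSubgroup.relIndex_sup_right _ _
    have hDD : Λ.index = m * (Λ.map π).index := by rw [← h2, h3, h1]
    set D' : ℕ := (Λ.map π).index with hD'
    have hm0 : m ≠ 0 := by intro h; rw [h] at hDD; simp at hDD; exact hD hDD
    have hD'0 : D' ≠ 0 := by intro h; rw [h] at hDD; simp at hDD; exact hD hDD
    -- divisibility in the kernel
    have hker : ∀ y : Fin (N + 1) → ℤ, y ∈ Λ → π y = 0 → (m : ℤ) ∣ y 0 := by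
      intro y hyΛ hyπ
      have hyker : y ∈ π.ker := AddMonoidHom.mem_ker.2 hyπ
      let φ : π.ker ≃+ ℤ :=
        { toFun := fun x => x.1 0
          invFun := fun c => ⟨Fin.cons c 0, by
            refine AddMonoidHom.mem_ker.2 (funext fun i => ?_)
            rw [hπapp]
            exact Fin.cons_succ _ _ _⟩
          left_inv := by
            rintro ⟨x, hx⟩
            apply Subtype.ext
            show Fin.cons (x 0) (0 : Fin N → ℤ) = x
            funext i
            refine Fin.cases ?_ (fun j => ?_) i
            · exact Fin.cons_zero _ _
            · rw [Fin.cons_succ]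
              exact (congrFun (AddMonoidHom.mem_ker.1 hx) j).symm
          right_inv := fun c => by simp
          map_add' := fun _ _ => rfl }
      set A : AddSubgroup ℤ := AddSubgroup.map φ.toAddMonoidHom (Λ.addSubgroupOf π.ker) with hA
      have hφmem : y 0 ∈ A :=
        ⟨⟨y, hyker⟩, (AddSubgroup.mem_addSubgroupOf).2 hyΛ, rfl⟩
      have hidx : A.index = m := by
        rw [hA, AddSubgroup.index_map]
        have hkerφ : φ.toAddMonoidHom.ker = ⊥ :=
          (AddMonoidHom.ker_eq_bot_iff _).2 φ.injective
        have hrφ : φ.toAddMonoidHom.range = ⊤ :=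
          AddMonoidHom.range_eq_top_of_surjective _ φ.surjective
        rw [hkerφ, hrφ, sup_bot_eq, AddSubgroup.index_top, mul_one]
        rfl
      obtain ⟨a, haA⟩ := Int.subgroup_cyclic A
      rw [← AddSubgroup.zmultiples_eq_closure] at haA
      have hdvd : a ∣ y 0 := by
        rw [haA] at hφmem; exact Int.mem_zmultiples_iff.1 hφmem
      have hnat : a.natAbs = m := by
        rw [haA, Int.index_zmultiples] at hidx; exact hidx
      rw [← hnat]
      exact Int.natAbs_dvd.2 hdvd
    -- the sets
    set S : Set (Fin (N + 1) → ℤ) := {x | x ∈ Λ ∧ ∀ i, |(x i : ℝ) - z i| ≤ R} with hS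
    set S' : Set (Fin N → ℤ) :=
      {y | y ∈ Λ.map π ∧ ∀ i, |(y i : ℝ) - (z ∘ Fin.succ) i| ≤ R} with hS'
    have hSfin : S.Finite := (box_finite (N + 1) z R).subset (fun x hx => hx.2)
    have hS'fin : S'.Finite := (box_finite N (z ∘ Fin.succ) R).subset (fun x hx => hx.2)
    have hmapsto : ∀ x ∈ S, π x ∈ S' := by
      rintro x ⟨hxΛ, hxb⟩
      refine ⟨AddSubgroup.mem_map_of_mem π hxΛ, fun i => ?_⟩
      rw [hπapp]
      exact hxb i.succ
    classical
    -- fiber bound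
    have hfib : ∀ y : Fin N → ℤ,
        ((hSfin.toFinset.filter (fun x => π x = y)).card : ℝ) ≤ 2 * R / m + 1 := by
      intro y
      rcases (hSfin.toFinset.filter (fun x => π x = y)).eq_empty_or_nonempty with he | ⟨x0, hx0⟩
      · rw [he]
        simp only [Finset.card_empty, Nat.cast_zero]
        positivity
      · obtain ⟨hx0S, hx0y⟩ := Finset.mem_filter.1 hx0
        rw [Set.Finite.mem_toFinset] at hx0S
        set T : Set ℤ := {c : ℤ | (m : ℤ) ∣ (c - x0 0) ∧ |(c : ℝ) - z 0| ≤ R} with hT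
        have hTfin : T.Finite := by
          apply Set.Finite.subset (Set.finite_Icc (⌈z 0 - R⌉) (⌊z 0 + R⌋))
          rintro c ⟨-, hc⟩
          have := abs_le.1 hc
          exact Set.mem_Icc.2 ⟨Int.ceil_le.2 (by linarith), Int.le_floor.2 (by linarith)⟩
        have hij : (↑(hSfin.toFinset.filter (fun x => π x = y)) : Set (Fin (N + 1) → ℤ)).ncard ≤
            T.ncard := by
          refine Set.ncard_le_ncard_of_injOn (fun x => x 0) ?_ ?_ hTfin
          · intro x hx
            rw [Finset.mem_coe, Finset.mem_filter, Set.Finite.mem_toFinset] at hx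
            obtain ⟨⟨hxΛ, hxb⟩, hxy⟩ := hx
            constructor
            · have hsub : x - x0 ∈ Λ := sub_mem hxΛ hx0S.1
              have hπ0 : π (x - x0) = 0 := by rw [map_sub, hxy, hx0y, sub_self]
              have := hker (x - x0) hsub hπ0
              simpa using this
            · exact hxb 0
          · intro x hx x' hx' hxx
            rw [Finset.mem_coe, Finset.mem_filter] at hx hx'
            funext i
            refine Fin.cases ?_ (fun j => ?_) i
            · exact hxx
            · have : π x j = π x' j := by rw [hx.2, hx'.2]
              rwa [hπapp, hπapp] at this
        rw [Set.ncard_coe_finset] at hij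
        calc ((hSfin.toFinset.filter (fun x => π x = y)).card : ℝ) ≤ (T.ncard : ℝ) := by
              exact_mod_cast hij
          _ ≤ 2 * R / m + 1 := count_arith m hm0 (x0 0) (z 0) R hR0
    -- covering
    have hcover : hSfin.toFinset.card ≤
        ∑ y ∈ hS'fin.toFinset, (hSfin.toFinset.filter (fun x => π x = y)).card := by
      calc hSfin.toFinset.card
          ≤ (hS'fin.toFinset.biUnion
              (fun y => hSfin.toFinset.filter (fun x => π x = y))).card := by
            apply Finset.card_le_card
            intro x hx
            rw [Set.Finite.mem_toFinset] at hx
            rw [Finset.mem_biUnion]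
            exact ⟨π x, (Set.Finite.mem_toFinset _).2 (hmapsto x hx),
              Finset.mem_filter.2 ⟨(Set.Finite.mem_toFinset _).2 hx, rfl⟩⟩
        _ ≤ _ := Finset.card_biUnion_le
    have hmain : (S.ncard : ℝ) ≤ (S'.ncard : ℝ) * (2 * R / m + 1) := by
      rw [Set.ncard_eq_toFinset_card S hSfin, Set.ncard_eq_toFinset_card S' hS'fin]
      calc (hSfin.toFinset.card : ℝ)
          ≤ ((∑ y ∈ hS'fin.toFinset,
              (hSfin.toFinset.filter (fun x => π x = y)).card : ℕ) : ℝ) := by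
            exact_mod_cast hcover
        _ = ∑ y ∈ hS'fin.toFinset,
              ((hSfin.toFinset.filter (fun x => π x = y)).card : ℝ) := by push_cast; ring
        _ ≤ ∑ y ∈ hS'fin.toFinset, (2 * R / m + 1) := Finset.sum_le_sum fun y _ => hfib y
        _ = (hS'fin.toFinset.card : ℝ) * (2 * R / m + 1) := by
            rw [Finset.sum_const, nsmul_eq_mul]
    -- apply induction hypothesis
    have hIH' := ih (Λ.map π) hD'0 R hR (z ∘ Fin.succ)
    have hIH : (S'.ncard : ℝ) ≤
        if N = 0 then 1 else (2 * R / D' + 1) * (2 * R + 1) ^ (N - 1) := hIH'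
    have hm1 : (1 : ℝ) ≤ (m : ℝ) := by exact_mod_cast Nat.one_le_iff_ne_zero.2 hm0
    have hD'1 : (1 : ℝ) ≤ (D' : ℝ) := by exact_mod_cast Nat.one_le_iff_ne_zero.2 hD'0
    have hfactor : (0 : ℝ) ≤ 2 * R / m + 1 := by positivity
    rcases Nat.eq_zero_or_pos N with hN | hN
    · subst hN
      rw [if_pos rfl] at hIH
      have hDm : Λ.index = m := by
        have htop : Λ.map π = ⊤ := (AddSubgroup.eq_top_iff' (Λ.map π)).2 fun x => by
          rw [Subsingleton.elim x 0]; exact AddSubgroup.zero_mem _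
        have h4 : D' = 1 := by rw [hD', htop, AddSubgroup.index_top]
        rw [hDD, h4, mul_one]
      calc (S.ncard : ℝ) ≤ (S'.ncard : ℝ) * (2 * R / m + 1) := hmain
        _ ≤ 1 * (2 * R / m + 1) := mul_le_mul_of_nonneg_right hIH hfactor
        _ = (2 * R / (Λ.index : ℝ) + 1) * (2 * R + 1) ^ (0 + 1 - 1) := by
            rw [hDm]; simp
    · rw [if_neg (Nat.pos_iff_ne_zero.1 hN)] at hIH
      have hpow : (0 : ℝ) ≤ (2 * R + 1) ^ (N - 1) := by positivity
      have hcast : ((Λ.index : ℕ) : ℝ) = (m : ℝ) * (D' : ℝ) := by rw [hDD]; push_cast; ring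
      have hexp : N - 1 + 1 = N + 1 - 1 := by omega
      calc (S.ncard : ℝ) ≤ (S'.ncard : ℝ) * (2 * R / m + 1) := hmain
        _ ≤ ((2 * R / D' + 1) * (2 * R + 1) ^ (N - 1)) * (2 * R / m + 1) :=
            mul_le_mul_of_nonneg_right hIH hfactor
        _ = ((2 * R / D' + 1) * (2 * R / m + 1)) * (2 * R + 1) ^ (N - 1) := by ring
        _ ≤ ((2 * R / ((m : ℝ) * D') + 1) * (2 * R + 1)) * (2 * R + 1) ^ (N - 1) :=
            mul_le_mul_of_nonneg_right (algebra_step R m D' hR0 hm1 hD'1) hpow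
        _ = (2 * R / ((m : ℝ) * D') + 1) * (2 * R + 1) ^ (N - 1 + 1) := by ring
        _ = (2 * R / (Λ.index : ℝ) + 1) * (2 * R + 1) ^ (N + 1 - 1) := by
            rw [hcast, hexp]


lemma index_eq_det (N : ℕ) (Λ : Submodule ℤ (Fin N → ℤ)) (b : Module.Basis (Fin N) ℤ Λ) :
    Λ.toAddSubgroup.index = (Matrix.det (Matrix.of fun i j => ((b j : Fin N → ℤ) i))).natAbs := by
  classical
  obtain ⟨n, snf⟩ := Λ.smithNormalForm (Pi.basisFun ℤ (Fin N))
  have hn : n = N := by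
    have e := snf.bN.indexEquiv b
    simpa using Fintype.card_congr e
  subst hn
  obtain ⟨bM, bN, f, a, ha⟩ := snf
  have hidx : Λ.toAddSubgroup.index = ∏ i : Fin n, (a i).natAbs := by
    have h := Module.Basis.SmithNormalForm.toAddSubgroup_index_eq_ite
      (⟨bM, bN, f, a, ha⟩ : Module.Basis.SmithNormalForm Λ (Fin n) n)
    simpa [Ideal.span_singleton_toAddSubgroup_eq_zmultiples, Int.index_zmultiples] using h
  have hfbij : Function.Bijective f := Finite.injective_iff_bijective.1 f.injective
  set σ : Fin n ≃ Fin n := Equiv.ofBijective f hfbij with hσ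
  set E : Module.Basis (Fin n) ℤ (Fin n → ℤ) := Pi.basisFun ℤ (Fin n) with hE
  set M1 : Matrix (Fin n) (Fin n) ℤ := Matrix.of fun i j => ((b j : Fin n → ℤ) i) with hM1
  set M2 : Matrix (Fin n) (Fin n) ℤ := Matrix.of fun i j => ((bN j : Fin n → ℤ) i) with hM2
  set M3 : Matrix (Fin n) (Fin n) ℤ := Matrix.of fun i j => (bM j) i with hM3
  set C : Matrix (Fin n) (Fin n) ℤ := bN.toMatrix b with hC
  set P : Matrix (Fin n) (Fin n) ℤ := Matrix.of fun k j => if k = f j then a j else 0 with hP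
  -- Claim A : M1 = M2 * C
  have claimA : M1 = M2 * C := by
    ext i j
    rw [hM1, Matrix.mul_apply]
    have hbj : (b j : Fin n → ℤ) = ∑ k, bN.repr (b j) k • ((bN k : Λ) : Fin n → ℤ) := by
      conv_lhs => rw [← bN.sum_repr (b j)]
      push_cast
      simp
    simp only [Matrix.of_apply, hbj, Finset.sum_apply, Pi.smul_apply, smul_eq_mul]
    apply Finset.sum_congr rfl
    intro k _
    rw [hM2, hC, Module.Basis.toMatrix_apply]
    simp [mul_comm]
  -- Claim B : M2 = M3 * P
  have claimB : M2 = M3 * P := by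
    ext i j
    rw [hM2, Matrix.mul_apply]
    have h2 : ((bN j : Λ) : Fin n → ℤ) = a j • bM (f j) := ha j
    simp only [Matrix.of_apply, h2, Pi.smul_apply, smul_eq_mul, hM3, hP, mul_ite, mul_zero]
    rw [Finset.sum_ite_eq' Finset.univ (f j) (fun k => (bM k) i * a j)]
    simp [mul_comm]
  -- unimodularity of C
  have hCdet : C.det.natAbs = 1 := by
    have : Invertible C := bN.invertibleToMatrix b
    have hu : IsUnit C.det := Matrix.isUnit_det_of_invertible C
    rcases Int.isUnit_iff.1 hu with h | h <;> rw [h] <;> rfl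
  -- unimodularity of M3
  have hM3det : M3.det.natAbs = 1 := by
    have hM3eq : M3 = E.toMatrix ⇑bM := by
      ext i j
      rw [hM3, hE, Module.Basis.toMatrix_apply]
      simp
    have : Invertible (E.toMatrix ⇑bM) := E.invertibleToMatrix bM
    have hu : IsUnit M3.det := by rw [hM3eq]; exact Matrix.isUnit_det_of_invertible _
    rcases Int.isUnit_iff.1 hu with h | h <;> rw [h] <;> rfl
  -- determinant of P
  have hPdet : P.det.natAbs = ∏ i : Fin n, (a i).natAbs := by
    have hPeq : P = Matrix.of fun k j => (Matrix.diagonal a) (σ.symm k) j := by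
      ext k j
      rw [hP]
      simp only [Matrix.of_apply, Matrix.diagonal]
      by_cases h : k = f j
      · subst h
        have hs : σ.symm (f j) = j := σ.symm_apply_apply j
        rw [hs]
        simp
      · have hc' : ¬(σ.symm k = j) := fun hc => h (by rw [← σ.apply_symm_apply k, hc]; rfl)
        rw [if_neg h, if_neg hc']
    have : P.det = Equiv.Perm.sign σ.symm * (Matrix.diagonal a).det := by
      rw [hPeq]
      exact Matrix.det_permute σ.symm (Matrix.diagonal a)
    rw [this, Int.natAbs_mul, Matrix.det_diagonal]
    have hsign : ((Equiv.Perm.sign σ.symm : ℤˣ) : ℤ).natAbs = 1 := Int.units_natAbs _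
    rw [hsign, one_mul]
    exact map_prod Int.natAbsHom a Finset.univ
  rw [hidx, claimA, claimB, Matrix.det_mul, Matrix.det_mul, Int.natAbs_mul, Int.natAbs_mul,
    hCdet, hM3det, hPdet, one_mul, mul_one]


theorem stmt_10 (N : ℕ) (Λ : Submodule ℤ (Fin N → ℤ)) (b : Module.Basis (Fin N) ℤ Λ)
    (Δ : ℕ)
    (hΔ : (Δ : ℤ) = |Matrix.det (Matrix.of fun i j => ((b j : Fin N → ℤ) i))|)
    (R : ℝ) (hR : 1 ≤ R) (z : Fin N → ℝ) :
    (({x : Fin N → ℤ | x ∈ Λ ∧ ∀ i, |(x i : ℝ) - z i| ≤ R}).ncard : ℝ) ≤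
      (2 * R / Δ + 1) * (2 * R + 1) ^ (N - 1) := by
  classical
  have hΔnat : Δ = (Matrix.det (Matrix.of fun i j => ((b j : Fin N → ℤ) i))).natAbs := by
    have h : ((Δ : ℕ) : ℤ) =
        (((Matrix.det (Matrix.of fun i j => ((b j : Fin N → ℤ) i))).natAbs : ℕ) : ℤ) := by
      rw [hΔ, Int.abs_eq_natAbs]
    exact_mod_cast h
  have hidx : Λ.toAddSubgroup.index = Δ := by rw [index_eq_det N Λ b, hΔnat]
  have hne : Λ.toAddSubgroup.index ≠ 0 :=
    Int.submodule_toAddSubgroup_index_ne_zero_iff.2 ⟨b.equivFun⟩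
  have hkey := key N Λ.toAddSubgroup hne R hR z
  have hsets : {x : Fin N → ℤ | x ∈ Λ.toAddSubgroup ∧ ∀ i, |(x i : ℝ) - z i| ≤ R} =
      {x : Fin N → ℤ | x ∈ Λ ∧ ∀ i, |(x i : ℝ) - z i| ≤ R} := rfl
  rw [hsets, hidx] at hkey
  rcases Nat.eq_zero_or_pos N with hN | hN
  · subst hN
    rw [if_pos rfl] at hkey
    have hΔ0 : (0 : ℝ) ≤ 2 * R / Δ := by positivity
    calc (({x : Fin 0 → ℤ | x ∈ Λ ∧ ∀ i, |(x i : ℝ) - z i| ≤ R}).ncard : ℝ) ≤ 1 := hkey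
      _ ≤ (2 * R / Δ + 1) * (2 * R + 1) ^ (0 - 1) := by
          simp only [Nat.zero_sub, pow_zero, mul_one]
          linarith
  · rw [if_neg (Nat.pos_iff_ne_zero.1 hN)] at hkey
    exact hkey
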